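/- Let H be a finite almost normal subgroup of a countable group G, and let (X,G) be a dynamical system admitting a factor map φ : X → G/N_G(H), where G acts on the finite discrete coset space G/N_G(H) by left multiplication. Then there exist a dynamical system (Y,G) and a factor map π : X → Y such that: (1) there is a factor map φ̃ : Y → G/N_G(H) with φ̃ ∘ π = φ; (2) for every g ∈ G and every y ∈ φ̃⁻¹{gN_G(H)}, and every x ∈ π⁻¹{y}, the stabilizer G_y equals the setwise product (gHg⁻¹)·G_x; (3) for every such y and any x ∈ π⁻¹{y}, the fiber π⁻¹{y} has cardinality |H| / |gHg⁻¹ ∩ G_x|, which is at most |H|. -/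

import Mathlib

open Pointwise

/-- The conjugate subgroup `g H g⁻¹`. -/
def conjSubgroup {G : Type*} [Group G] (g : G) (H : Subgroup G) : Subgroup G :=
  Subgroup.map (MulAut.conj g).toMonoidHom H

universe u

section Aux

variable {G : Type*} [Group G] (H : Subgroup G)

lemma mem_conjSubgroup {g x : G} : x ∈ conjSubgroup g H ↔ ∃ h ∈ H, g * h * g⁻¹ = x := by
  simp [conjSubgroup, Subgroup.mem_map]

lemma conjSubgroup_mul (a b : G) :
    conjSubgroup (a * b) H = Subgroup.map (MulAut.conj a).toMonoidHom (conjSubgroup b H) := by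
  rw [conjSubgroup, conjSubgroup, Subgroup.map_map]
  congr 1
  ext x
  show (a * b) * x * (a * b)⁻¹ = a * (b * x * b⁻¹) * a⁻¹
  group

lemma conjSubgroup_of_mem_normalizer {n : G} (hn : n ∈ (Subgroup.normalizer (H : Set G))) :
    conjSubgroup n H = H := by
  ext x
  rw [mem_conjSubgroup]
  constructor
  · rintro ⟨h, hh, rfl⟩
    exact (Subgroup.mem_normalizer_iff.mp hn h).mp hh
  · intro hx
    refine ⟨n⁻¹ * x * n, ?_, by group⟩
    have := (Subgroup.mem_normalizer_iff.mp hn (n⁻¹ * x * n)).mpr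
    apply this
    convert hx using 1
    group

lemma conjSubgroup_congr {a b : G} (h : (a : G ⧸ (Subgroup.normalizer (H : Set G))) = b) :
    conjSubgroup a H = conjSubgroup b H := by
  have hn : a⁻¹ * b ∈ (Subgroup.normalizer (H : Set G)) := (QuotientGroup.eq ..).mp h
  have : b = a * (a⁻¹ * b) := by group
  rw [this, conjSubgroup_mul, conjSubgroup_of_mem_normalizer H hn]
  rfl

/-- The conjugate of `H` associated to a coset. -/
noncomputable def myK (q : G ⧸ (Subgroup.normalizer (H : Set G))) : Subgroup G := conjSubgroup q.out H

lemma myK_mk (g : G) : myK H (g : G ⧸ (Subgroup.normalizer (H : Set G))) = conjSubgroup g H :=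
  conjSubgroup_congr H (QuotientGroup.out_eq' _)

lemma myK_smul (g : G) (q : G ⧸ (Subgroup.normalizer (H : Set G))) :
    myK H (g • q) = Subgroup.map (MulAut.conj g).toMonoidHom (myK H q) := by
  obtain ⟨a, rfl⟩ := QuotientGroup.mk_surjective q
  have : g • (a : G ⧸ (Subgroup.normalizer (H : Set G))) = ((g * a : G) : G ⧸ (Subgroup.normalizer (H : Set G))) := rfl
  rw [this, myK_mk, myK_mk, conjSubgroup_mul]

variable {X : Type u} [MulAction G X] (φ : X → G ⧸ (Subgroup.normalizer (H : Set G)))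
variable (hφequiv : ∀ (g : G) (x : X), φ (g • x) = g • φ x)

include hφequiv in
lemma phi_smul_eq {k : G} {x : X} (hk : k ∈ myK H (φ x)) : φ (k • x) = φ x := by
  rw [hφequiv]
  obtain ⟨h, hh, hkdef⟩ := (mem_conjSubgroup H).mp hk
  conv_lhs => rw [← QuotientGroup.out_eq' (φ x)]
  conv_rhs => rw [← QuotientGroup.out_eq' (φ x)]
  have h2 : k • (((φ x).out : G) : G ⧸ (Subgroup.normalizer (H : Set G))) = ((k * (φ x).out : G) : G ⧸ (Subgroup.normalizer (H : Set G))) := rfl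
  rw [h2, QuotientGroup.eq]
  have h3 : (k * (φ x).out)⁻¹ * (φ x).out = h⁻¹ := by rw [← hkdef]; group
  rw [h3]
  exact (Subgroup.normalizer (H : Set G)).inv_mem (Subgroup.le_normalizer hh)

/-- The equivalence relation: `x ~ x'` iff `x'` is in the orbit of `x` under the conjugate
of `H` determined by `φ x`. -/
def krel (x x' : X) : Prop := ∃ k ∈ myK H (φ x), k • x = x'

include hφequiv in
lemma krel_phi_eq {x x' : X} (h : krel H φ x x') : φ x' = φ x := by
  obtain ⟨k, hk, rfl⟩ := h
  exact phi_smul_eq H φ hφequiv hk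

def krelSetoid : Setoid X where
  r := krel H φ
  iseqv := by
    constructor
    · exact fun x => ⟨1, one_mem _, one_smul _ _⟩
    · rintro x x' ⟨k, hk, rfl⟩
      have hphi : φ (k • x) = φ x := phi_smul_eq H φ hφequiv hk
      exact ⟨k⁻¹, by rw [hphi]; exact inv_mem hk, by rw [inv_smul_smul]⟩
    · rintro x x' x'' ⟨k, hk, rfl⟩ ⟨k', hk', rfl⟩
      have hphi : φ (k • x) = φ x := phi_smul_eq H φ hφequiv hk
      refine ⟨k' * k, mul_mem (hphi ▸ hk') hk, mul_smul k' k x⟩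

include hφequiv in
lemma krel_smul {g : G} {x x' : X} (h : krel H φ x x') : krel H φ (g • x) (g • x') := by
  obtain ⟨k, hk, rfl⟩ := h
  refine ⟨g * k * g⁻¹, ?_, ?_⟩
  · rw [hφequiv, myK_smul]
    exact Subgroup.mem_map.mpr ⟨k, hk, rfl⟩
  · rw [smul_smul, smul_smul]
    congr 1
    group

/-- The action of `G` on the quotient. -/
def qAct : MulAction G (Quotient (krelSetoid H φ hφequiv)) where
  smul g := Quotient.map (fun x => g • x) (fun _ _ h => krel_smul H φ hφequiv h)
  one_smul := by
    rintro ⟨x⟩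
    show Quotient.mk _ ((1 : G) • x) = Quotient.mk _ x
    rw [one_smul]
  mul_smul := by
    rintro g g' ⟨x⟩
    show Quotient.mk _ ((g * g') • x) = Quotient.mk _ (g • g' • x)
    rw [mul_smul]

end Aux


/-- Let `H` be a finite almost normal subgroup of a countable group `G`, and let `(X,G)` be a
dynamical system with a factor map `φ : X → G/N_G(H)` (the finite discrete coset space with the
left multiplication action). Then there are a dynamical system `(Y,G)` and a factor map
`π : X → Y` such that: (1) there is a factor map `φ̃ : Y → G/N_G(H)` with `φ̃ ∘ π = φ`;
(2) for `y ∈ φ̃⁻¹{gN_G(H)}` and `x ∈ π⁻¹{y}`, the stabilizer `G_y` equals the setwise product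
`(gHg⁻¹)·G_x`; (3) for such `y` and `x`, the fiber `π⁻¹{y}` has `|H|/|gHg⁻¹ ∩ G_x| ≤ |H|`
elements. -/
theorem stmt14 {G : Type*} {X : Type u} [Group G] [Countable G]
    [TopologicalSpace X] [CompactSpace X] [T2Space X]
    [MulAction G X] [ContinuousConstSMul G X]
    (H : Subgroup G) (hfin : (H : Set G).Finite) (hAN : (Subgroup.normalizer (H : Set G)).FiniteIndex)
    (φ : X → G ⧸ (Subgroup.normalizer (H : Set G)))
    (hφcont : ∀ q : G ⧸ (Subgroup.normalizer (H : Set G)), IsOpen (φ ⁻¹' {q}))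
    (hφsurj : Function.Surjective φ)
    (hφequiv : ∀ (g : G) (x : X), φ (g • x) = g • φ x) :
    ∃ (Y : Type u) (_ : TopologicalSpace Y) (_ : MulAction G Y),
      CompactSpace Y ∧ T2Space Y ∧ ContinuousConstSMul G Y ∧
      ∃ (π : X → Y) (φt : Y → G ⧸ (Subgroup.normalizer (H : Set G))),
        Continuous π ∧ Function.Surjective π ∧
        (∀ (g : G) (x : X), π (g • x) = g • π x) ∧
        (∀ q : G ⧸ (Subgroup.normalizer (H : Set G)), IsOpen (φt ⁻¹' {q})) ∧
        Function.Surjective φt ∧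
        (∀ (g : G) (y : Y), φt (g • y) = g • φt y) ∧
        φt ∘ π = φ ∧
        (∀ (g : G) (y : Y), φt y = (g : G ⧸ (Subgroup.normalizer (H : Set G))) →
          ∀ x ∈ π ⁻¹' {y},
            (MulAction.stabilizer G y : Set G) =
              (conjSubgroup g H : Set G) * (MulAction.stabilizer G x : Set G)) ∧
        (∀ (g : G) (y : Y), φt y = (g : G ⧸ (Subgroup.normalizer (H : Set G))) →
          ∀ x ∈ π ⁻¹' {y},
            Nat.card (π ⁻¹' {y}) =
              Nat.card ↥H / Nat.card ↥(conjSubgroup g H ⊓ MulAction.stabilizer G x) ∧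
            Nat.card (π ⁻¹' {y}) ≤ Nat.card ↥H) := by
  classical
  haveI := hAN
  letI s : Setoid X := krelSetoid H φ hφequiv
  letI act : MulAction G (Quotient s) := qAct H φ hφequiv
  have hq : Topology.IsQuotientMap (Quotient.mk s) := isQuotientMap_quot_mk
  have hsmul_mk : ∀ (g : G) (x : X), g • Quotient.mk s x = Quotient.mk s (g • x) :=
    fun g x => rfl
  have hmkeq : ∀ x x' : X, Quotient.mk s x = Quotient.mk s x' ↔ krel H φ x x' :=
    fun x x' => Quotient.eq''
  -- finiteness of the conjugates
  have hKsetfin : ∀ q : G ⧸ (Subgroup.normalizer (H : Set G)), (myK H q : Set G).Finite := by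
    intro q
    rw [myK, conjSubgroup, Subgroup.coe_map]
    exact hfin.image _
  -- preimages of arbitrary sets under φ are open
  have hopenPre : ∀ S : Set (G ⧸ (Subgroup.normalizer (H : Set G))), IsOpen (φ ⁻¹' S) := by
    intro S
    have : φ ⁻¹' S = ⋃ q ∈ S, φ ⁻¹' {q} := by
      ext x
      simp only [Set.mem_preimage, Set.mem_iUnion, Set.mem_singleton_iff]
      exact ⟨fun h => ⟨φ x, h, rfl⟩, fun ⟨q, hq, he⟩ => he ▸ hq⟩
    rw [this]
    exact isOpen_biUnion fun q _ => hφcont q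
  have hclopen : ∀ q : G ⧸ (Subgroup.normalizer (H : Set G)), IsClosed (φ ⁻¹' {q}) := by
    intro q
    rw [← isOpen_compl_iff, ← Set.preimage_compl]
    exact hopenPre _
  -- the quotient map is open
  have hmkopen : IsOpenMap (Quotient.mk s) := by
    intro U hU
    rw [← hq.isOpen_preimage]
    rw [isOpen_iff_forall_mem_open]
    rintro x hx
    obtain ⟨u, hu, hequ⟩ := hx
    obtain ⟨k, hk, rfl⟩ := (hmkeq u x).mp hequ
    have hphiku : φ (k • u) = φ u := phi_smul_eq H φ hφequiv hk
    refine ⟨φ ⁻¹' {φ (k • u)} ∩ k • U, ?_, (hφcont _).inter (hU.smul k),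
      ⟨rfl, Set.smul_mem_smul_set hu⟩⟩
    rintro z ⟨hz1, hz2⟩
    obtain ⟨w, hwU, rfl⟩ := hz2
    have hzphi : φ (k • w) = φ (k • u) := hz1
    have hkz : k⁻¹ ∈ myK H (φ (k • w)) := by
      rw [hzphi, hphiku]; exact inv_mem hk
    have hphiw : φ w = φ (k • w) := by
      have := phi_smul_eq H φ hφequiv hkz
      rwa [inv_smul_smul] at this
    have hphiwu : φ w = φ u := hphiw.trans (hzphi.trans hphiku)
    have hrel : krel H φ w (k • w) := ⟨k, by rw [hphiwu]; exact hk, rfl⟩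
    exact ⟨w, hwU, Quotient.sound hrel⟩
  -- the relation is closed
  have hRclosed : IsClosed {p : X × X | krel H φ p.1 p.2} := by
    have hdecomp : {p : X × X | krel H φ p.1 p.2} =
        ⋃ q : G ⧸ (Subgroup.normalizer (H : Set G)), ⋃ k ∈ (myK H q : Set G),
          ({p : X × X | φ p.1 = q} ∩ {p : X × X | k • p.1 = p.2}) := by
      ext ⟨x, x'⟩
      simp only [Set.mem_setOf_eq, Set.mem_iUnion, Set.mem_inter_iff]
      constructor
      · rintro ⟨k, hk, rfl⟩; exact ⟨φ x, k, hk, rfl, rfl⟩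
      · rintro ⟨q, k, hk, hq', rfl⟩; exact ⟨k, hq' ▸ hk, rfl⟩
    rw [hdecomp]
    refine isClosed_iUnion_of_finite fun q => ?_
    refine (hKsetfin q).isClosed_biUnion fun k _ => ?_
    exact ((hclopen q).preimage continuous_fst).inter
      (isClosed_eq ((continuous_const_smul k).comp continuous_fst) continuous_snd)
  -- Hausdorff
  haveI hT2 : T2Space (Quotient s) := by
    rw [t2_iff_isClosed_diagonal, ← isOpen_compl_iff]
    have himg : (Set.diagonal (Quotient s))ᶜ =
        Prod.map (Quotient.mk s) (Quotient.mk s) '' {p : X × X | krel H φ p.1 p.2}ᶜ := by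
      ext ⟨y, y'⟩
      constructor
      · intro hne
        obtain ⟨x, rfl⟩ := Quotient.mk_surjective y
        obtain ⟨x', rfl⟩ := Quotient.mk_surjective y'
        refine ⟨(x, x'), fun hR => hne (Quotient.sound hR), rfl⟩
      · rintro ⟨⟨x, x'⟩, hR, heq⟩
        intro hdiag
        apply hR
        have : Quotient.mk s x = Quotient.mk s x' := by
          have h1 : (Prod.map (Quotient.mk s) (Quotient.mk s) (x, x')).1 =
              (Prod.map (Quotient.mk s) (Quotient.mk s) (x, x')).2 := by
            rw [heq]; exact hdiag
          exact h1
        exact (hmkeq x x').mp this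
    rw [himg]
    exact (hmkopen.prodMap hmkopen) _ hRclosed.isOpen_compl
  -- continuity of the action on the quotient
  haveI hCCS : ContinuousConstSMul G (Quotient s) := by
    refine ⟨fun g => ?_⟩
    rw [hq.continuous_iff]
    show Continuous fun x => g • Quotient.mk s x
    simp only [hsmul_mk]
    exact continuous_quotient_mk'.comp (continuous_const_smul g)
  -- the factor map to the coset space
  refine ⟨Quotient s, inferInstance, act, inferInstance, hT2, hCCS,
    Quotient.mk s, Quotient.lift φ (fun a b h => (krel_phi_eq H φ hφequiv h).symm),
    continuous_quotient_mk', Quotient.mk_surjective, hsmul_mk, ?_, ?_, ?_, rfl, ?_, ?_⟩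
  · -- openness of φt preimages
    intro q'
    rw [← hq.isOpen_preimage]
    exact hφcont q'
  · -- surjectivity of φt
    intro q'
    obtain ⟨x, rfl⟩ := hφsurj q'
    exact ⟨Quotient.mk s x, rfl⟩
  · -- equivariance of φt
    intro g y
    obtain ⟨x, rfl⟩ := Quotient.mk_surjective y
    show φ (g • x) = g • φ x
    exact hφequiv g x
  · -- stabilizers
    intro g y hy x hx
    have hxy : Quotient.mk s x = y := hx
    subst hxy
    have hφx : φ x = (g : G ⧸ (Subgroup.normalizer (H : Set G))) := hy
    have hKx : myK H (φ x) = conjSubgroup g H := by rw [hφx, myK_mk]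
    ext t
    constructor
    · intro ht
      have ht' : t • Quotient.mk s x = Quotient.mk s x := ht
      rw [hsmul_mk] at ht'
      obtain ⟨k, hk, hkx⟩ := (hmkeq _ _).mp ht'
      have hphitx : φ (t • x) = φ x := (krel_phi_eq H φ hφequiv ⟨k, hk, hkx⟩).symm
      rw [hphitx, hKx] at hk
      have h1 : k⁻¹ ∈ (conjSubgroup g H : Set G) := inv_mem hk
      have h2 : k * t ∈ (MulAction.stabilizer G x : Set G) := by
        show (k * t) • x = x
        rw [mul_smul, hkx]
      have h3 : k⁻¹ * (k * t) = t := by group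
      exact h3 ▸ Set.mul_mem_mul h1 h2
    · intro ht
      obtain ⟨k, hk, u, hu, rfl⟩ := Set.mem_mul.mp ht
      have hu' : u • x = x := hu
      show (k * u) • Quotient.mk s x = Quotient.mk s x
      rw [hsmul_mk, mul_smul, hu']
      have hkK : k ∈ myK H (φ x) := by rw [hKx]; exact hk
      have hrel : krel H φ x (k • x) := ⟨k, hkK, rfl⟩
      exact (Quotient.sound hrel).symm
  · -- cardinality of fibers
    intro g y hy x hx
    have hxy : Quotient.mk s x = y := hx
    subst hxy
    have hφx : φ x = (g : G ⧸ (Subgroup.normalizer (H : Set G))) := hy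
    have hKx : myK H (φ x) = conjSubgroup g H := by rw [hφx, myK_mk]
    set K₀ : Subgroup G := conjSubgroup g H with hK₀
    haveI hK₀fin : Finite K₀ := by
      have : (K₀ : Set G).Finite := hKx ▸ hKsetfin (φ x)
      exact this.to_subtype
    -- the fiber is the K₀-orbit of x
    have hfib : Quotient.mk s ⁻¹' {Quotient.mk s x} = MulAction.orbit K₀ x := by
      ext x'
      simp only [Set.mem_preimage, Set.mem_singleton_iff]
      rw [hmkeq]
      constructor
      · rintro ⟨k, hk, hkx⟩
        have hphix' : φ x' = φ x := (krel_phi_eq H φ hφequiv ⟨k, hk, hkx⟩).symm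
        rw [hphix', hKx] at hk
        refine MulAction.mem_orbit_iff.mpr ⟨⟨k⁻¹, inv_mem hk⟩, ?_⟩
        show k⁻¹ • x = x'
        rw [← hkx, inv_smul_smul]
      · intro hmem
        obtain ⟨⟨k, hk⟩, rfl⟩ := MulAction.mem_orbit_iff.mp hmem
        have hkx : k ∈ myK H (φ x) := hKx ▸ hk
        have hphikx : φ ((⟨k, hk⟩ : K₀) • x) = φ x := phi_smul_eq H φ hφequiv hkx
        refine ⟨k⁻¹, ?_, ?_⟩
        · rw [hphikx]
          exact inv_mem hkx
        · show k⁻¹ • (k • x) = x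
          rw [inv_smul_smul]
    -- orbit-stabilizer
    have horb : Nat.card K₀ =
        Nat.card (MulAction.orbit K₀ x) * Nat.card (MulAction.stabilizer K₀ x) := by
      rw [Subgroup.card_eq_card_quotient_mul_card_subgroup (MulAction.stabilizer K₀ x)]
      congr 1
      exact (Nat.card_congr (MulAction.orbitEquivQuotientStabilizer K₀ x)).symm
    have hstabeq : Nat.card (MulAction.stabilizer K₀ x) =
        Nat.card ↥(K₀ ⊓ MulAction.stabilizer G x) := by
      refine Nat.card_congr
        ⟨fun s' => ⟨s'.1.1, Subgroup.mem_inf.mpr ⟨s'.1.2, s'.2⟩⟩,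
         fun t => ⟨⟨t.1, (Subgroup.mem_inf.mp t.2).1⟩, (Subgroup.mem_inf.mp t.2).2⟩,
         fun s' => rfl, fun t => rfl⟩
    have hKcard : Nat.card K₀ = Nat.card H := by
      refine Nat.card_congr (Subgroup.equivMapOfInjective H
        (MulAut.conj g).toMonoidHom (MulAut.conj g).injective).toEquiv.symm
    haveI : Finite ↥(K₀ ⊓ MulAction.stabilizer G x) := by
      have h1 : ((K₀ ⊓ MulAction.stabilizer G x : Subgroup G) : Set G) ⊆ (K₀ : Set G) := by
        intro a ha
        exact (Subgroup.mem_inf.mp ha).1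
      exact (((hKx ▸ hKsetfin (φ x)) : (K₀ : Set G).Finite).subset h1).to_subtype
    have hmpos : 0 < Nat.card ↥(K₀ ⊓ MulAction.stabilizer G x) := Nat.card_pos
    have hmain : Nat.card H =
        Nat.card (Quotient.mk s ⁻¹' {Quotient.mk s x}) *
          Nat.card ↥(K₀ ⊓ MulAction.stabilizer G x) := by
      rw [← hKcard, horb, hstabeq, hfib]
    have hcard : Nat.card (Quotient.mk s ⁻¹' {Quotient.mk s x}) =
        Nat.card H / Nat.card ↥(K₀ ⊓ MulAction.stabilizer G x) :=
      (Nat.div_eq_of_eq_mul_left hmpos hmain).symm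
    exact ⟨hcard, hcard ▸ Nat.div_le_self _ _⟩
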